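/- If the arbitrage index of a cycle of length n+1 satisfies I > 1/(r₁^{n+1}·r₂^{n+1}), then there exists an input δ > 0 with U(δ) > 0; that is, a profitable cyclic transaction exists along the cycle. -/

import Mathlib

/-- Constant-product AMM swap: output of swapping input `δ` through a pool with
input-side reserve `a`, output-side reserve `b` and fee parameters `r1, r2`. -/
noncomputable def swap (r1 r2 a b δ : ℝ) : ℝ := r1 * r2 * b * δ / (a + r1 * δ)

/-- Output of feeding an input through a sequence of pools; each pool is a pair
`(input-side reserve, output-side reserve)` along the direction of trade. -/
noncomputable def cyclicOut (r1 r2 : ℝ) : List (ℝ × ℝ) → ℝ → ℝ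
  | [], δ => δ
  | p :: ps, δ => cyclicOut r1 r2 ps (swap r1 r2 p.1 p.2 δ)

/-- Arbitrage index of a cycle of pools: product of output-side reserves divided
by product of input-side reserves. -/
noncomputable def arbIndex (ps : List (ℝ × ℝ)) : ℝ :=
  (ps.map Prod.snd).prod / (ps.map Prod.fst).prod

/-- The reversed cycle: the same pools in opposite order with the roles of the
two reserves of each pool interchanged. -/
def revPools (ps : List (ℝ × ℝ)) : List (ℝ × ℝ) := (ps.map Prod.swap).reverse

/-- The updated pools after executing a cyclic transaction with input `δ`:
each pool's input-side reserve increases by the amount swapped in and its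
output-side reserve decreases by the amount swapped out. -/
noncomputable def execPools (r1 r2 : ℝ) : List (ℝ × ℝ) → ℝ → List (ℝ × ℝ)
  | [], _ => []
  | p :: ps, δ =>
      (p.1 + δ, p.2 - swap r1 r2 p.1 p.2 δ) :: execPools r1 r2 ps (swap r1 r2 p.1 p.2 δ)

open Topology Filter

lemma swap_zero (r1 r2 a b : ℝ) : swap r1 r2 a b 0 = 0 := by
  simp [swap]

lemma swap_hasDerivAt (r1 r2 a b : ℝ) (ha : a ≠ 0) :
    HasDerivAt (swap r1 r2 a b) (r1 * r2 * b / a) 0 := by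
  have h1 : HasDerivAt (fun x : ℝ => r1 * r2 * b * x) (r1 * r2 * b) 0 := by
    simpa using (hasDerivAt_id (0:ℝ)).const_mul (r1 * r2 * b)
  have h2 : HasDerivAt (fun x : ℝ => a + r1 * x) r1 0 := by
    simpa using ((hasDerivAt_id (0:ℝ)).const_mul r1).const_add a
  have h3 := h1.div h2 (by simpa using ha)
  refine h3.congr_deriv ?_
  simp only [mul_zero, add_zero, sub_zero]
  rw [div_eq_div_iff (pow_ne_zero 2 ha) ha]
  ring

lemma cyclicOut_zero (r1 r2 : ℝ) (ps : List (ℝ × ℝ)) : cyclicOut r1 r2 ps 0 = 0 := by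
  induction ps with
  | nil => rfl
  | cons p ps ih => simp [cyclicOut, swap_zero, ih]

lemma cyclicOut_hasDerivAt (r1 r2 : ℝ) (ps : List (ℝ × ℝ))
    (hpos : ∀ p ∈ ps, (0:ℝ) < p.1 ∧ (0:ℝ) < p.2) :
    HasDerivAt (cyclicOut r1 r2 ps)
      ((ps.map (fun p => r1 * r2 * p.2 / p.1)).prod) 0 := by
  induction ps with
  | nil => simpa [cyclicOut] using hasDerivAt_id' (0:ℝ)
  | cons p ps ih =>
    have hp := hpos p (by simp)
    have hswap := swap_hasDerivAt r1 r2 p.1 p.2 hp.1.ne'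
    have hrest : HasDerivAt (cyclicOut r1 r2 ps)
        ((ps.map (fun p => r1 * r2 * p.2 / p.1)).prod) (swap r1 r2 p.1 p.2 0) := by
      rw [swap_zero]
      exact ih (fun q hq => hpos q (by simp [hq]))
    have := hrest.comp 0 hswap
    simpa [cyclicOut, mul_comm, Function.comp_def] using this

lemma prod_map_eq (r1 r2 : ℝ) (ps : List (ℝ × ℝ))
    (hpos : ∀ p ∈ ps, (0:ℝ) < p.1 ∧ (0:ℝ) < p.2) :
    (ps.map (fun p => r1 * r2 * p.2 / p.1)).prod
      = (r1 * r2) ^ ps.length * arbIndex ps := by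
  induction ps with
  | nil => simp [arbIndex]
  | cons p ps ih =>
    have hp := hpos p (by simp)
    have h1 : ((ps.map Prod.fst).prod : ℝ) ≠ 0 := by
      apply List.prod_ne_zero
      intro h
      simp only [List.mem_map] at h
      obtain ⟨q, hq, hq0⟩ := h
      exact (hpos q (by simp [hq])).1.ne' hq0
    have := ih (fun q hq => hpos q (by simp [hq]))
    simp only [List.map_cons, List.prod_cons, List.length_cons, arbIndex] at *
    rw [this]
    field_simp
    ring

/-- if the arbitrage index of a cycle of length n+1 exceeds
1/(r1^(n+1) * r2^(n+1)), then some input yields strictly positive utility. -/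
theorem profitable_cycle_exists
    (n : ℕ) (ps : List (ℝ × ℝ)) (hlen : ps.length = n + 1)
    (hpos : ∀ p ∈ ps, 0 < p.1 ∧ 0 < p.2)
    (r1 r2 : ℝ) (hr1 : 0 < r1) (hr1' : r1 ≤ 1) (hr2 : 0 < r2) (hr2' : r2 ≤ 1)
    (hI : arbIndex ps > 1 / (r1 ^ (n + 1) * r2 ^ (n + 1))) :
    ∃ δ : ℝ, 0 < δ ∧ cyclicOut r1 r2 ps δ - δ > 0 := by
  set C : ℝ := (ps.map (fun p => r1 * r2 * p.2 / p.1)).prod with hC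
  have hCval : C = (r1 * r2) ^ (n + 1) * arbIndex ps := by
    rw [hC, prod_map_eq r1 r2 ps hpos, hlen]
  have hrr : (0:ℝ) < (r1 * r2) ^ (n + 1) := by positivity
  have hC1 : 1 < C := by
    rw [hCval]
    calc (1:ℝ) = (r1*r2)^(n+1) * (1 / (r1^(n+1) * r2^(n+1))) := by
          rw [mul_pow]; field_simp
    _ < (r1*r2)^(n+1) * arbIndex ps := mul_lt_mul_of_pos_left hI hrr
  have hder := cyclicOut_hasDerivAt r1 r2 ps hpos
  rw [hasDerivAt_iff_tendsto_slope] at hder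
  have hmono : 𝓝[>] (0:ℝ) ≤ 𝓝[≠] (0:ℝ) :=
    nhdsWithin_mono 0 (fun x hx => ne_of_gt hx)
  have htend := hder.mono_left hmono
  have hev : ∀ᶠ x in 𝓝[>] (0:ℝ), 1 < slope (cyclicOut r1 r2 ps) 0 x :=
    htend.eventually_const_lt hC1
  have hev2 : ∀ᶠ x in 𝓝[>] (0:ℝ), x ∈ Set.Ioi (0:ℝ) := eventually_mem_nhdsWithin
  obtain ⟨x, hx1, hx2⟩ := (hev.and hev2).exists
  refine ⟨x, hx2, ?_⟩
  have : slope (cyclicOut r1 r2 ps) 0 x = cyclicOut r1 r2 ps x / x := by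
    simp [slope, cyclicOut_zero, div_eq_inv_mul]
  rw [this] at hx1
  have hxpos : (0:ℝ) < x := hx2
  have := (one_lt_div hxpos).mp hx1
  linarith
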